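/- Let n, m be positive integers, π ∈ S_n, ρ ∈ S_m with π(n) = n and ρ(1) = 1. If Q_{I_n} + Q_π is bent on 𝔽₂ⁿ and Q_{I_m} + Q_ρ is bent on 𝔽₂ᵐ (n, m even), then Q_{I_{n+m}} + Q_{πρ^R} is bent on 𝔽₂^{n+m}. -/
import Mathlib


open Finset

/-- Walsh–Hadamard transform (integer-valued) of a Boolean function over an
arbitrary finite index type. -/
def walshOn {ι : Type*} [Fintype ι] [DecidableEq ι]
    (f : (ι → ZMod 2) → ZMod 2) (c : ι → ZMod 2) : ℤ :=
  ∑ x : ι → ZMod 2, (-1 : ℤ) ^ ((f x + ∑ k, c k * x k).val)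

/-- The quadratic function `Q_π(x) = ∑_{i=1}^{n-1} x_{π(i)} x_{π(i+1)}`
(0-indexed). -/
def Qperm (n : ℕ) (π : Equiv.Perm (Fin n)) (x : Fin n → ZMod 2) : ZMod 2 :=
  ∑ i : Fin n, if h : (i : ℕ) + 1 < n then x (π i) * x (π ⟨(i : ℕ) + 1, h⟩) else 0

/-- A Boolean function on `𝔽₂ⁿ` is bent if its Walsh spectrum is `{±2^(n/2)}`. -/
def IsBent (n : ℕ) (f : (Fin n → ZMod 2) → ZMod 2) : Prop :=
  ∀ c, walshOn f c = 2 ^ (n / 2) ∨ walshOn f c = -2 ^ (n / 2)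

/-- A Boolean function on `𝔽₂ⁿ` is near-bent if its Walsh spectrum is
`{0, ±2^((n+1)/2)}`. -/
def IsNearBent (n : ℕ) (f : (Fin n → ZMod 2) → ZMod 2) : Prop :=
  ∀ c, walshOn f c = 0 ∨ walshOn f c = 2 ^ ((n + 1) / 2) ∨
    walshOn f c = -(2 ^ ((n + 1) / 2))

/-- The reverse of a permutation: `π̃(i) = π(n+1-i)` (1-indexed). -/
def reversePerm (n : ℕ) (π : Equiv.Perm (Fin n)) : Equiv.Perm (Fin n) :=
  Fin.revPerm.trans π

/-- The concatenation `πρ^R` of a permutation of `{1,...,n}` with a (shifted)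
permutation of `{1,...,m}`. -/

lemma sum_split {M : Type*} [AddCommMonoid M] {n : ℕ} (a : Fin n)
    (G G' : Fin n → M) (h0 : G' a = 0) (h : ∀ i, i ≠ a → G i = G' i) :
    ∑ i, G i = ∑ i, G' i + G a := by
  rw [← Finset.add_sum_erase _ G (Finset.mem_univ a), add_comm]
  congr 1
  rw [← Finset.sum_erase Finset.univ h0]
  exact Finset.sum_congr rfl fun i hi => h i (Finset.ne_of_mem_erase hi)


lemma permConcat_castAdd (n m : ℕ) (π : Equiv.Perm (Fin n)) (ρ : Equiv.Perm (Fin m)) (i : Fin n) :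
    (finSumFinEquiv.symm.trans ((Equiv.sumCongr π ρ).trans finSumFinEquiv)) (Fin.castAdd m i)
      = Fin.castAdd m (π i) := by
  simp [Equiv.trans_apply]

lemma permConcat_natAdd (n m : ℕ) (π : Equiv.Perm (Fin n)) (ρ : Equiv.Perm (Fin m)) (j : Fin m) :
    (finSumFinEquiv.symm.trans ((Equiv.sumCongr π ρ).trans finSumFinEquiv)) (Fin.natAdd n j)
      = Fin.natAdd n (ρ j) := by
  simp [Equiv.trans_apply]

lemma Qperm_concat (n m : ℕ) (hn : 0 < n) (hm : 0 < m)
    (π : Equiv.Perm (Fin n)) (ρ : Equiv.Perm (Fin m))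
    (hπ : π ⟨n - 1, Nat.sub_lt hn Nat.one_pos⟩ = ⟨n - 1, Nat.sub_lt hn Nat.one_pos⟩)
    (hρ : ρ ⟨0, hm⟩ = ⟨0, hm⟩) (z : Fin (n + m) → ZMod 2) :
    Qperm (n + m) (finSumFinEquiv.symm.trans ((Equiv.sumCongr π ρ).trans finSumFinEquiv)) z
      = Qperm n π (z ∘ Fin.castAdd m) + Qperm m ρ (z ∘ Fin.natAdd n)
        + z (Fin.castAdd m ⟨n - 1, Nat.sub_lt hn Nat.one_pos⟩) * z (Fin.natAdd n ⟨0, hm⟩) := by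
  set σ := finSumFinEquiv.symm.trans ((Equiv.sumCongr π ρ).trans finSumFinEquiv) with hσ
  unfold Qperm
  rw [Fin.sum_univ_add]
  have h1 : ∑ i : Fin n,
      (if h : ((Fin.castAdd m i : Fin (n+m)) : ℕ) + 1 < n + m then
        z (σ (Fin.castAdd m i)) * z (σ ⟨((Fin.castAdd m i : Fin (n+m)) : ℕ) + 1, h⟩) else 0)
      = (∑ i : Fin n, if h : (i : ℕ) + 1 < n then
          (z ∘ Fin.castAdd m) (π i) * (z ∘ Fin.castAdd m) (π ⟨(i : ℕ) + 1, h⟩) else 0)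
        + z (Fin.castAdd m ⟨n - 1, Nat.sub_lt hn Nat.one_pos⟩) * z (Fin.natAdd n ⟨0, hm⟩) := by
    refine (sum_split (⟨n - 1, Nat.sub_lt hn Nat.one_pos⟩ : Fin n) _
      (fun i => if h : (i : ℕ) + 1 < n then
          (z ∘ Fin.castAdd m) (π i) * (z ∘ Fin.castAdd m) (π ⟨(i : ℕ) + 1, h⟩) else 0)
      ?_ ?_).trans ?_
    · beta_reduce; rw [dif_neg (by simp; omega)]
    · intro i hi
      have hi1 : (i : ℕ) + 1 < n := by
        have h2 := i.isLt
        have h3 : (i : ℕ) ≠ n - 1 := fun hc => hi (Fin.ext hc)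
        omega
      beta_reduce
      rw [dif_pos (show ((Fin.castAdd m i : Fin (n+m)) : ℕ) + 1 < n + m by
        simpa using Nat.lt_of_lt_of_le hi1 (Nat.le_add_right n m)), dif_pos hi1]
      have e1 : σ (Fin.castAdd m i) = Fin.castAdd m (π i) := permConcat_castAdd n m π ρ i
      have e2 : (⟨((Fin.castAdd m i : Fin (n+m)) : ℕ) + 1, by
            simpa using Nat.lt_of_lt_of_le hi1 (Nat.le_add_right n m)⟩ : Fin (n+m))
          = Fin.castAdd m ⟨(i : ℕ) + 1, hi1⟩ := by
        apply Fin.ext; simp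
      rw [e1, e2, permConcat_castAdd]
      rfl
    · congr 1
      have hc : ((Fin.castAdd m (⟨n - 1, Nat.sub_lt hn Nat.one_pos⟩ : Fin n) : Fin (n+m)) : ℕ) + 1 < n + m := by
        simp; omega
      rw [dif_pos hc]
      have e1 : σ (Fin.castAdd m ⟨n - 1, Nat.sub_lt hn Nat.one_pos⟩)
          = Fin.castAdd m ⟨n - 1, Nat.sub_lt hn Nat.one_pos⟩ := by
        rw [permConcat_castAdd, hπ]
      have e2 : (⟨((Fin.castAdd m (⟨n - 1, Nat.sub_lt hn Nat.one_pos⟩ : Fin n) : Fin (n+m)) : ℕ) + 1, hc⟩ : Fin (n+m))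
          = Fin.natAdd n ⟨0, hm⟩ := by
        apply Fin.ext; simp; omega
      rw [e1, e2, permConcat_natAdd, hρ]
  have h2 : ∑ j : Fin m,
      (if h : ((Fin.natAdd n j : Fin (n+m)) : ℕ) + 1 < n + m then
        z (σ (Fin.natAdd n j)) * z (σ ⟨((Fin.natAdd n j : Fin (n+m)) : ℕ) + 1, h⟩) else 0)
      = ∑ j : Fin m, if h : (j : ℕ) + 1 < m then
          (z ∘ Fin.natAdd n) (ρ j) * (z ∘ Fin.natAdd n) (ρ ⟨(j : ℕ) + 1, h⟩) else 0 := by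
    apply Finset.sum_congr rfl
    intro j _
    by_cases hj : (j : ℕ) + 1 < m
    · have hc : ((Fin.natAdd n j : Fin (n+m)) : ℕ) + 1 < n + m := by simp; omega
      rw [dif_pos hc, dif_pos hj]
      have e2 : (⟨((Fin.natAdd n j : Fin (n+m)) : ℕ) + 1, hc⟩ : Fin (n+m))
          = Fin.natAdd n ⟨(j : ℕ) + 1, hj⟩ := by
        apply Fin.ext; simp; omega
      rw [permConcat_natAdd, e2, permConcat_natAdd]
      rfl
    · rw [dif_neg (by simp; omega), dif_neg hj]
  rw [h1, h2]
  ring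




lemma neg_one_pow_zmod_add (u v : ZMod 2) :
    ((-1 : ℤ)) ^ ((u + v).val) = (-1 : ℤ) ^ u.val * (-1 : ℤ) ^ v.val := by revert u v; decide

lemma concat_one (n m : ℕ) :
    (finSumFinEquiv.symm.trans ((Equiv.sumCongr (1 : Equiv.Perm (Fin n)) (1 : Equiv.Perm (Fin m))).trans finSumFinEquiv)) = 1 := by
  ext i
  simp

noncomputable def Ezy (n m : ℕ) : (Fin (n + m) → ZMod 2) ≃ (Fin n → ZMod 2) × (Fin m → ZMod 2) :=
  (Equiv.arrowCongr finSumFinEquiv.symm (Equiv.refl (ZMod 2))).trans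
    (Equiv.sumArrowEquivProdArrow _ _ _)

lemma Ezy_fst (n m : ℕ) (z : Fin (n + m) → ZMod 2) : (Ezy n m z).1 = z ∘ Fin.castAdd m := by
  funext i
  simp [Ezy, Equiv.sumArrowEquivProdArrow, Equiv.arrowCongr]

lemma Ezy_snd (n m : ℕ) (z : Fin (n + m) → ZMod 2) : (Ezy n m z).2 = z ∘ Fin.natAdd n := by
  funext j
  simp [Ezy, Equiv.sumArrowEquivProdArrow, Equiv.arrowCongr]

lemma walsh_factor (n m : ℕ)
    (F : (Fin n → ZMod 2) → ZMod 2) (G : (Fin m → ZMod 2) → ZMod 2)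
    (H : (Fin (n + m) → ZMod 2) → ZMod 2)
    (hH : ∀ z, H z = F (z ∘ Fin.castAdd m) + G (z ∘ Fin.natAdd n))
    (c : Fin (n + m) → ZMod 2) :
    walshOn H c = walshOn F (c ∘ Fin.castAdd m) * walshOn G (c ∘ Fin.natAdd n) := by
  unfold walshOn
  calc ∑ z : Fin (n + m) → ZMod 2, (-1 : ℤ) ^ ((H z + ∑ k, c k * z k).val)
      = ∑ p : (Fin n → ZMod 2) × (Fin m → ZMod 2),
          ((-1 : ℤ) ^ ((F p.1 + ∑ i, (c ∘ Fin.castAdd m) i * p.1 i).val)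
            * (-1 : ℤ) ^ ((G p.2 + ∑ j, (c ∘ Fin.natAdd n) j * p.2 j).val)) := ?_
    _ = ∑ x : Fin n → ZMod 2, ∑ y : Fin m → ZMod 2,
          ((-1 : ℤ) ^ ((F x + ∑ i, (c ∘ Fin.castAdd m) i * x i).val)
            * (-1 : ℤ) ^ ((G y + ∑ j, (c ∘ Fin.natAdd n) j * y j).val)) :=
        Fintype.sum_prod_type _
    _ = (∑ x : Fin n → ZMod 2, (-1 : ℤ) ^ ((F x + ∑ i, (c ∘ Fin.castAdd m) i * x i).val))
          * ∑ y : Fin m → ZMod 2, (-1 : ℤ) ^ ((G y + ∑ j, (c ∘ Fin.natAdd n) j * y j).val) :=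
        (Finset.sum_mul_sum _ _ _ _).symm
  apply Fintype.sum_equiv (Ezy n m)
  intro z
  rw [hH z]
  have hc : ∑ k, c k * z k
      = (∑ i, (c ∘ Fin.castAdd m) i * (z ∘ Fin.castAdd m) i)
        + ∑ j, (c ∘ Fin.natAdd n) j * (z ∘ Fin.natAdd n) j :=
    Fin.sum_univ_add _
  rw [hc]
  have : F (z ∘ Fin.castAdd m) + G (z ∘ Fin.natAdd n)
      + ((∑ i, (c ∘ Fin.castAdd m) i * (z ∘ Fin.castAdd m) i)
        + ∑ j, (c ∘ Fin.natAdd n) j * (z ∘ Fin.natAdd n) j)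
      = (F (z ∘ Fin.castAdd m) + ∑ i, (c ∘ Fin.castAdd m) i * (z ∘ Fin.castAdd m) i)
        + (G (z ∘ Fin.natAdd n) + ∑ j, (c ∘ Fin.natAdd n) j * (z ∘ Fin.natAdd n) j) := by ring
  rw [this, neg_one_pow_zmod_add, Ezy_fst, Ezy_snd]

def permConcat (n m : ℕ) (π : Equiv.Perm (Fin n)) (ρ : Equiv.Perm (Fin m)) :
    Equiv.Perm (Fin (n + m)) :=
  finSumFinEquiv.symm.trans ((Equiv.sumCongr π ρ).trans finSumFinEquiv)

theorem bent_concat_fixed_ends (n m : ℕ) (hn : 0 < n) (hm : 0 < m)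
    (hne : Even n) (hme : Even m)
    (π : Equiv.Perm (Fin n)) (ρ : Equiv.Perm (Fin m))
    (hπ : π ⟨n - 1, Nat.sub_lt hn Nat.one_pos⟩ = ⟨n - 1, Nat.sub_lt hn Nat.one_pos⟩)
    (hρ : ρ ⟨0, hm⟩ = ⟨0, hm⟩)
    (hf : IsBent n (fun x => Qperm n 1 x + Qperm n π x))
    (hg : IsBent m (fun y => Qperm m 1 y + Qperm m ρ y)) :
    IsBent (n + m) (fun z => Qperm (n + m) 1 z + Qperm (n + m) (permConcat n m π ρ) z) := by
  intro c
  set F : (Fin n → ZMod 2) → ZMod 2 := fun x => Qperm n 1 x + Qperm n π x with hF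
  set G : (Fin m → ZMod 2) → ZMod 2 := fun y => Qperm m 1 y + Qperm m ρ y with hG
  have hone : (1 : Equiv.Perm (Fin n)) ⟨n - 1, Nat.sub_lt hn Nat.one_pos⟩
      = ⟨n - 1, Nat.sub_lt hn Nat.one_pos⟩ := rfl
  have hone' : (1 : Equiv.Perm (Fin m)) ⟨0, hm⟩ = ⟨0, hm⟩ := rfl
  have hH : ∀ z : Fin (n + m) → ZMod 2,
      Qperm (n + m) 1 z + Qperm (n + m) (permConcat n m π ρ) z
        = F (z ∘ Fin.castAdd m) + G (z ∘ Fin.natAdd n) := by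
    intro z
    have e1 : Qperm (n + m) 1 z
        = Qperm n 1 (z ∘ Fin.castAdd m) + Qperm m 1 (z ∘ Fin.natAdd n)
          + z (Fin.castAdd m ⟨n - 1, Nat.sub_lt hn Nat.one_pos⟩) * z (Fin.natAdd n ⟨0, hm⟩) := by
      rw [← concat_one n m]
      exact Qperm_concat n m hn hm 1 1 hone hone' z
    have e2 : Qperm (n + m) (permConcat n m π ρ) z
        = Qperm n π (z ∘ Fin.castAdd m) + Qperm m ρ (z ∘ Fin.natAdd n)
          + z (Fin.castAdd m ⟨n - 1, Nat.sub_lt hn Nat.one_pos⟩) * z (Fin.natAdd n ⟨0, hm⟩) :=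
      Qperm_concat n m hn hm π ρ hπ hρ z
    rw [e1, e2, hF, hG]
    set t := z (Fin.castAdd m ⟨n - 1, Nat.sub_lt hn Nat.one_pos⟩) * z (Fin.natAdd n ⟨0, hm⟩)
    have : Qperm n 1 (z ∘ Fin.castAdd m) + Qperm m 1 (z ∘ Fin.natAdd n) + t
        + (Qperm n π (z ∘ Fin.castAdd m) + Qperm m ρ (z ∘ Fin.natAdd n) + t)
        = (Qperm n 1 (z ∘ Fin.castAdd m) + Qperm n π (z ∘ Fin.castAdd m))
          + (Qperm m 1 (z ∘ Fin.natAdd n) + Qperm m ρ (z ∘ Fin.natAdd n)) + (t + t) := by ring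
    rw [this, CharTwo.add_self_eq_zero, add_zero]
  have hw : walshOn (fun z => Qperm (n + m) 1 z + Qperm (n + m) (permConcat n m π ρ) z) c
      = walshOn F (c ∘ Fin.castAdd m) * walshOn G (c ∘ Fin.natAdd n) :=
    walsh_factor n m F G _ hH c
  have hd : (n + m) / 2 = n / 2 + m / 2 := by
    obtain ⟨k, hk⟩ := hne; obtain ⟨l, hl⟩ := hme; omega
  have hp : (2 : ℤ) ^ (n / 2) * 2 ^ (m / 2) = 2 ^ ((n + m) / 2) := by
    rw [hd, pow_add]
  rcases hf (c ∘ Fin.castAdd m) with h1 | h1 <;> rcases hg (c ∘ Fin.natAdd n) with h2 | h2 <;>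
    rw [hw, h1, h2]
  · left; exact hp
  · right; rw [mul_neg, hp]
  · right; rw [neg_mul, hp]
  · left; rw [neg_mul_neg, hp]
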